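/- Let a ∈ (0,1), θ > 0 and −1 < ζ < 0. Then for every t > 0, a^{−ζ} Γ(ζ+1)/(1−a^{−ζ}) ≤ Σ_{j∈ℤ} (θ a^j t)^ζ (1−e^{−θ a^j t}) ≤ Γ(ζ+1)/(1−a^{−ζ}), where Γ is the Gamma function (and the two-sided series converges for every t > 0). -/

import Mathlib

open Filter Topology

open MeasureTheory Set in
theorem stmt6 (a θ ζ : ℝ) (ha0 : 0 < a) (ha1 : a < 1) (hθ : 0 < θ)
    (hζ0 : -1 < ζ) (hζ1 : ζ < 0) :
    ∀ t > 0,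
      Summable (fun j : ℤ => (θ * a ^ j * t) ^ ζ * (1 - Real.exp (-(θ * a ^ j * t)))) ∧
      a ^ (-ζ) * Real.Gamma (ζ + 1) / (1 - a ^ (-ζ)) ≤
        ∑' j : ℤ, (θ * a ^ j * t) ^ ζ * (1 - Real.exp (-(θ * a ^ j * t))) ∧
      ∑' j : ℤ, (θ * a ^ j * t) ^ ζ * (1 - Real.exp (-(θ * a ^ j * t))) ≤
        Real.Gamma (ζ + 1) / (1 - a ^ (-ζ)) := by
  intro t ht
  have hat : 0 < θ * t := mul_pos hθ ht
  set H : ℤ → ℝ := fun j : ℤ => (θ * a ^ j * t) ^ ζ * (1 - Real.exp (-(θ * a ^ j * t)))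
    with hHdef
  set x : ℤ → ℝ := fun j : ℤ => θ * a ^ j * t with hxdef
  have hHx : ∀ j, H j = x j ^ ζ * (1 - Real.exp (-(x j))) := fun j => rfl
  have hx : ∀ j, 0 < x j := fun j => by
    have h := zpow_pos ha0 j
    exact mul_pos (mul_pos hθ h) ht
  have hxs : ∀ j, x (j + 1) = a * x j := by
    intro j
    simp only [hxdef]
    rw [zpow_add_one₀ ha0.ne']
    ring
  have hmono : ∀ j k : ℤ, j ≤ k → x k ≤ x j := by
    intro j k hjk
    have h := zpow_le_zpow_right_of_le_one₀ ha0 ha1.le hjk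
    have := ht
    have := hθ
    simp only [hxdef]
    nlinarith [zpow_pos ha0 j, zpow_pos ha0 k]
  have hrp : ∀ j, x (j + 1) ^ ζ = a ^ ζ * x j ^ ζ := by
    intro j
    rw [hxs j, Real.mul_rpow ha0.le (hx j).le]
  have hinv : a ^ (-ζ) * a ^ ζ = 1 := by
    rw [← Real.rpow_add ha0]
    simp
  have hapow : a ^ (-ζ) < 1 := Real.rpow_lt_one ha0.le ha1 (by linarith)
  have hapow0 : 0 < a ^ (-ζ) := Real.rpow_pos_of_pos ha0 _
  have hd : 0 < 1 - a ^ (-ζ) := by linarith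
  -- key rpow-zpow conversion
  have key : ∀ (j : ℤ) (w : ℝ), ((a : ℝ) ^ j) ^ w = a ^ ((j : ℝ) * w) := by
    intro j w
    rw [← Real.rpow_intCast a j, ← Real.rpow_mul ha0.le]
  -- nonnegativity
  have hexp_le_one : ∀ j, Real.exp (-(x j)) ≤ 1 := fun j =>
    Real.exp_le_one_iff.mpr (by linarith [hx j])
  have hH0 : ∀ j, 0 ≤ H j := by
    intro j
    rw [hHx j]
    exact mul_nonneg (Real.rpow_nonneg (hx j).le _) (by linarith [hexp_le_one j])
  -- Summability of H
  have hHsum : Summable H := by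
    apply Summable.of_nat_of_neg
    · -- bound by (θ*t)^(ζ+1) * (a^(ζ+1))^n
      have hr0 : (0:ℝ) ≤ a ^ (ζ + 1) := (Real.rpow_pos_of_pos ha0 _).le
      have hr1 : a ^ (ζ + 1) < 1 := Real.rpow_lt_one ha0.le ha1 (by linarith)
      refine Summable.of_nonneg_of_le (fun n => hH0 _) ?_
        ((summable_geometric_of_lt_one hr0 hr1).mul_left ((θ * t) ^ (ζ + 1)))
      intro n
      have h1 : 1 - Real.exp (-(x n)) ≤ x n := by
        have := Real.add_one_le_exp (-(x n))
        linarith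
      have h2 : H n ≤ x (n : ℤ) ^ ζ * x (n : ℤ) := by
        rw [hHx]
        exact mul_le_mul_of_nonneg_left h1 (Real.rpow_nonneg (hx _).le _)
      have h3 : x (n : ℤ) ^ ζ * x (n : ℤ) = x (n : ℤ) ^ (ζ + 1) := by
        rw [Real.rpow_add_one (hx (n : ℤ)).ne']
      have h4 : x (n : ℤ) ^ (ζ + 1) = (θ * t) ^ (ζ + 1) * (a ^ (ζ + 1)) ^ n := by
        have hb : x (n : ℤ) = (θ * t) * a ^ (n : ℤ) := by simp only [hxdef]; ring
        rw [hb, Real.mul_rpow hat.le (zpow_pos ha0 _).le, key,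
          ← Real.rpow_natCast (a ^ (ζ + 1)) n, ← Real.rpow_mul ha0.le]
        push_cast
        ring_nf
      rw [h3, h4] at h2
      exact h2
    · have hr0 : (0:ℝ) ≤ a ^ (-ζ) := hapow0.le
      refine Summable.of_nonneg_of_le (fun n => hH0 _) ?_
        ((summable_geometric_of_lt_one hr0 hapow).mul_left ((θ * t) ^ ζ))
      intro n
      have h1 : 1 - Real.exp (-(x (-(n:ℤ)))) ≤ 1 := by
        linarith [Real.exp_pos (-(x (-(n:ℤ))))]
      have h2 : H (-(n:ℤ)) ≤ x (-(n:ℤ)) ^ ζ := by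
        rw [hHx]
        nth_rewrite 2 [← mul_one (x (-(n:ℤ)) ^ ζ)]
        exact mul_le_mul_of_nonneg_left h1 (Real.rpow_nonneg (hx _).le _)
      have h4 : x (-(n:ℤ)) ^ ζ = (θ * t) ^ ζ * (a ^ (-ζ)) ^ n := by
        have hb : x (-(n:ℤ)) = (θ * t) * a ^ (-(n:ℤ)) := by simp only [hxdef]; ring
        rw [hb, Real.mul_rpow hat.le (zpow_pos ha0 _).le, key,
          ← Real.rpow_natCast (a ^ (-ζ)) n, ← Real.rpow_mul ha0.le]
        push_cast
        ring_nf
      rw [h4] at h2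
      exact h2
  -- shifted sum
  have hHsum1 : Summable (fun k : ℤ => H (k + 1)) := by
    have := (Equiv.addRight (1 : ℤ)).summable_iff.mpr hHsum
    simpa [Function.comp_def] using this
  have htsum_shift : ∑' k : ℤ, H (k + 1) = ∑' k : ℤ, H k := by
    have := (Equiv.addRight (1 : ℤ)).tsum_eq H
    simpa using this
  -- the telescoped series S
  set S : ℤ → ℝ := fun k => x k ^ ζ * (Real.exp (-(x (k + 1))) - Real.exp (-(x k)))
    with hSdef
  have hSk : ∀ k, S k = H k - a ^ (-ζ) * H (k + 1) := by
    intro k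
    have h1 : a ^ (-ζ) * x (k + 1) ^ ζ = x k ^ ζ := by
      rw [hrp k, ← mul_assoc, hinv, one_mul]
    rw [hHx k, hHx (k + 1), hSdef]
    calc x k ^ ζ * (Real.exp (-(x (k + 1))) - Real.exp (-(x k)))
        = x k ^ ζ * (1 - Real.exp (-(x k))) - x k ^ ζ * (1 - Real.exp (-(x (k + 1)))) := by
          ring
      _ = x k ^ ζ * (1 - Real.exp (-(x k)))
          - a ^ (-ζ) * (x (k + 1) ^ ζ * (1 - Real.exp (-(x (k + 1))))) := by
          rw [← mul_assoc, h1]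
  have hSsum : Summable S :=
    (hHsum.sub (hHsum1.mul_left (a ^ (-ζ)))).congr fun k => (hSk k).symm
  have htsumS : ∑' k, S k = (1 - a ^ (-ζ)) * ∑' k, H k := by
    calc ∑' k, S k = ∑' k, (H k - a ^ (-ζ) * H (k + 1)) := tsum_congr hSk
      _ = (∑' k, H k) - ∑' k, a ^ (-ζ) * H (k + 1) :=
          Summable.tsum_sub hHsum (hHsum1.mul_left _)
      _ = (∑' k, H k) - a ^ (-ζ) * ∑' k, H (k + 1) := by rw [tsum_mul_left]
      _ = (1 - a ^ (-ζ)) * ∑' k, H k := by rw [htsum_shift]; ring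
  -- the Gamma integral
  set f : ℝ → ℝ := fun u => Real.exp (-u) * u ^ ζ with hfdef
  have hfint : IntegrableOn f (Ioi (0:ℝ)) := by
    have h := Real.GammaIntegral_convergent (s := ζ + 1) (by linarith)
    simpa [hfdef] using h
  have hΓ : ∫ u in Ioi (0:ℝ), f u = Real.Gamma (ζ + 1) := by
    rw [Real.Gamma_eq_integral (by linarith : (0:ℝ) < ζ + 1)]
    simp [hfdef]
  -- the union of intervals
  have hUnion : (⋃ k : ℤ, Ioc (x (k + 1)) (x k)) = Ioi (0:ℝ) := by
    ext u
    simp only [mem_iUnion, mem_Ioc, mem_Ioi]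
    constructor
    · rintro ⟨k, h1, _⟩
      exact lt_trans (hx (k + 1)) h1
    · intro hu
      have hr : 0 < u / (θ * t) := div_pos hu hat
      set k : ℤ := ⌊Real.logb a (u / (θ * t))⌋ with hk
      have hfl1 : (k : ℝ) ≤ Real.logb a (u / (θ * t)) := Int.floor_le _
      have hfl2 : Real.logb a (u / (θ * t)) < (k : ℝ) + 1 := Int.lt_floor_add_one _
      have hlogb : a ^ Real.logb a (u / (θ * t)) = u / (θ * t) :=
        Real.rpow_logb ha0 ha1.ne hr
      refine ⟨k, ?_, ?_⟩
      · -- x (k+1) < u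
        have h1 : a ^ ((k : ℝ) + 1) < u / (θ * t) := by
          calc a ^ ((k : ℝ) + 1) < a ^ Real.logb a (u / (θ * t)) :=
                Real.rpow_lt_rpow_of_exponent_gt ha0 ha1 hfl2
            _ = u / (θ * t) := hlogb
        have h2 : (a : ℝ) ^ (k + 1 : ℤ) = a ^ ((k : ℝ) + 1) := by
          rw [← Real.rpow_intCast a (k + 1)]
          push_cast
          ring_nf
        have h3 : (a : ℝ) ^ (k + 1 : ℤ) * (θ * t) < u := by
          rw [h2]
          calc a ^ ((k : ℝ) + 1) * (θ * t) < u / (θ * t) * (θ * t) := by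
                exact mul_lt_mul_of_pos_right h1 hat
            _ = u := by field_simp
        calc x (k + 1) = a ^ (k + 1 : ℤ) * (θ * t) := by simp only [hxdef]; ring
          _ < u := h3
      · -- u ≤ x k
        have h1 : u / (θ * t) ≤ a ^ ((k : ℝ)) := by
          calc u / (θ * t) = a ^ Real.logb a (u / (θ * t)) := hlogb.symm
            _ ≤ a ^ ((k : ℝ)) := Real.rpow_le_rpow_of_exponent_ge ha0 ha1.le hfl1
        have h2 : (a : ℝ) ^ (k : ℤ) = a ^ ((k : ℝ)) := by
          rw [← Real.rpow_intCast a k]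
        have h3 : u ≤ (a : ℝ) ^ (k : ℤ) * (θ * t) := by
          rw [h2]
          calc u = u / (θ * t) * (θ * t) := by field_simp
            _ ≤ a ^ ((k : ℝ)) * (θ * t) := mul_le_mul_of_nonneg_right h1 hat.le
        calc u ≤ a ^ (k : ℤ) * (θ * t) := h3
          _ = x k := by simp only [hxdef]; ring
  -- disjointness
  have hdisj : Pairwise (Function.onFun Disjoint fun k : ℤ => Ioc (x (k + 1)) (x k)) := by
    intro k l hkl
    rcases lt_or_gt_of_ne hkl with h | h
    · refine Set.Ioc_disjoint_Ioc.mpr ?_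
      have h2 : x l ≤ x (k + 1) := hmono _ _ (by omega)
      calc min (x k) (x l) ≤ x l := min_le_right _ _
        _ ≤ x (k + 1) := h2
        _ ≤ max (x (k + 1)) (x (l + 1)) := le_max_left _ _
    · refine Set.Ioc_disjoint_Ioc.mpr ?_
      have h2 : x k ≤ x (l + 1) := hmono _ _ (by omega)
      calc min (x k) (x l) ≤ x k := min_le_left _ _
        _ ≤ x (l + 1) := h2
        _ ≤ max (x (k + 1)) (x (l + 1)) := le_max_right _ _
  have hfiU : IntegrableOn f (⋃ k : ℤ, Ioc (x (k + 1)) (x k)) := by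
    rw [hUnion]; exact hfint
  set I : ℤ → ℝ := fun k => ∫ u in Ioc (x (k + 1)) (x k), f u with hIdef
  have hHasSum : HasSum I (Real.Gamma (ζ + 1)) := by
    have h := MeasureTheory.hasSum_integral_iUnion (μ := volume)
      (fun k : ℤ => measurableSet_Ioc) hdisj hfiU
    rwa [hUnion, hΓ] at h
  have hIsum : Summable I := hHasSum.summable
  have htsumI : ∑' k, I k = Real.Gamma (ζ + 1) := hHasSum.tsum_eq
  -- exponential integral over each piece
  have hE : ∀ k : ℤ, ∫ u in Ioc (x (k + 1)) (x k), Real.exp (-u)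
      = Real.exp (-(x (k + 1))) - Real.exp (-(x k)) := by
    intro k
    have hle : x (k + 1) ≤ x k := hmono _ _ (by omega)
    rw [← intervalIntegral.integral_of_le hle]
    have h := intervalIntegral.integral_comp_neg (a := x (k + 1)) (b := x k)
      (fun u => Real.exp u)
    rw [h, integral_exp]
  -- integrability on pieces
  have hfI : ∀ k : ℤ, IntegrableOn f (Ioc (x (k + 1)) (x k)) := by
    intro k
    exact hfint.mono_set (fun u hu => lt_trans (hx (k + 1)) hu.1)
  have hcI : ∀ (k : ℤ) (C : ℝ), IntegrableOn (fun u => C * Real.exp (-u))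
      (Ioc (x (k + 1)) (x k)) := by
    intro k C
    exact (Continuous.integrableOn_Ioc (continuous_const.mul (Real.continuous_exp.comp continuous_neg)))
  -- termwise bounds
  have hterm : ∀ k : ℤ, a ^ (-ζ) * I k ≤ S k ∧ S k ≤ I k := by
    intro k
    have hp : 0 < x (k + 1) := hx (k + 1)
    have hq : 0 < x k := hx k
    have hCint : ∀ C : ℝ, ∫ u in Ioc (x (k + 1)) (x k), C * Real.exp (-u)
        = C * (Real.exp (-(x (k + 1))) - Real.exp (-(x k))) := by
      intro C
      rw [MeasureTheory.integral_const_mul, hE k]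
    constructor
    · -- a^{-ζ} * I k ≤ S k, via I k ≤ x(k+1)^ζ * E = a^ζ * S k
      have hub : I k ≤ x (k + 1) ^ ζ * (Real.exp (-(x (k + 1))) - Real.exp (-(x k))) := by
        rw [← hCint (x (k + 1) ^ ζ)]
        refine MeasureTheory.setIntegral_mono_on (hfI k) (hcI k _) measurableSet_Ioc ?_
        intro u hu
        have hu0 : 0 < u := lt_trans hp hu.1
        have h1 : u ^ ζ ≤ x (k + 1) ^ ζ :=
          Real.rpow_le_rpow_of_nonpos hp hu.1.le hζ1.le
        calc Real.exp (-u) * u ^ ζ ≤ Real.exp (-u) * x (k + 1) ^ ζ :=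
              mul_le_mul_of_nonneg_left h1 (Real.exp_pos _).le
          _ = x (k + 1) ^ ζ * Real.exp (-u) := by ring
      have heq : x (k + 1) ^ ζ * (Real.exp (-(x (k + 1))) - Real.exp (-(x k)))
          = a ^ ζ * S k := by
        rw [hSdef, hrp k]; ring
      have h2 : a ^ (-ζ) * I k ≤ a ^ (-ζ) * (a ^ ζ * S k) := by
        rw [← heq]
        exact mul_le_mul_of_nonneg_left (heq ▸ hub) hapow0.le
      calc a ^ (-ζ) * I k ≤ a ^ (-ζ) * (a ^ ζ * S k) := h2
        _ = (a ^ (-ζ) * a ^ ζ) * S k := by ring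
        _ = S k := by rw [hinv, one_mul]
    · -- S k ≤ I k
      show x k ^ ζ * (Real.exp (-(x (k + 1))) - Real.exp (-(x k))) ≤ I k
      have h0 : x k ^ ζ * (Real.exp (-(x (k + 1))) - Real.exp (-(x k)))
          = ∫ u in Ioc (x (k + 1)) (x k), x k ^ ζ * Real.exp (-u) := (hCint _).symm
      rw [h0]
      refine MeasureTheory.setIntegral_mono_on (hcI k _) (hfI k) measurableSet_Ioc ?_
      intro u hu
      have hu0 : 0 < u := lt_trans hp hu.1
      have h1 : x k ^ ζ ≤ u ^ ζ :=
        Real.rpow_le_rpow_of_nonpos hu0 hu.2 hζ1.le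
      calc x k ^ ζ * Real.exp (-u) ≤ u ^ ζ * Real.exp (-u) :=
            mul_le_mul_of_nonneg_right h1 (Real.exp_pos _).le
        _ = Real.exp (-u) * u ^ ζ := by ring
  -- sum bounds
  have hS_le : ∑' k, S k ≤ Real.Gamma (ζ + 1) := by
    rw [← htsumI]
    exact Summable.tsum_le_tsum (fun k => (hterm k).2) hSsum hIsum
  have hS_ge : a ^ (-ζ) * Real.Gamma (ζ + 1) ≤ ∑' k, S k := by
    have h1 : ∑' k, a ^ (-ζ) * I k = a ^ (-ζ) * Real.Gamma (ζ + 1) := by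
      rw [tsum_mul_left, htsumI]
    rw [← h1]
    exact Summable.tsum_le_tsum (fun k => (hterm k).1) (hIsum.mul_left _) hSsum
  refine ⟨hHsum, ?_, ?_⟩
  · rw [div_le_iff₀ hd]
    calc a ^ (-ζ) * Real.Gamma (ζ + 1) ≤ ∑' k, S k := hS_ge
      _ = (1 - a ^ (-ζ)) * ∑' k, H k := htsumS
      _ = (∑' k, H k) * (1 - a ^ (-ζ)) := by ring
  · rw [le_div_iff₀ hd]
    calc (∑' k, H k) * (1 - a ^ (-ζ)) = ∑' k, S k := by rw [htsumS]; ring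
      _ ≤ Real.Gamma (ζ + 1) := hS_le
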